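/- Let (Z, d) be a metric space, D a distribution on Z, and U : Z* → [0,1] a potential that is β(k)-Lipschitz stable with respect to d, meaning |U(S ∪ {z}) − U(S ∪ {z'})| ≤ β(k)·d(z, z') for all k ∈ ℕ, all S ∈ Z^{k-1}, and all z, z' ∈ Z, where β : ℕ → [0,1] is non-increasing. Then for all m ∈ ℕ and all z, z' ∈ Z, |ν(z; U, D, m) − ν(z'; U, D, m)| ≤ E_{k ~ Uniform[m]}[β(k)] · d(z, z'), where ν(z; U, D, m) = E_{k ~ Uniform[m], S ~ D^{k-1}}[U(S ∪ {z}) − U(S)]. -/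

import Mathlib

open MeasureTheory

noncomputable def margContrib {Z : Type*} (U : Multiset Z → ℝ) (z : Z) {n : ℕ}
    (S : Fin n → Z) : ℝ :=
  U (z ::ₘ ↑(List.ofFn S)) - U ↑(List.ofFn S)

/-- Distributional Shapley value:
`ν(z; U, D, m) = E_{k ~ Uniform[m], S ~ D^{k-1}}[U(S ∪ {z}) − U(S)]`. -/
noncomputable def distShapley {Z : Type*} [MeasurableSpace Z] (U : Multiset Z → ℝ)
    (D : Measure Z) (m : ℕ) (z : Z) : ℝ :=
  (1 / m : ℝ) * ∑ k ∈ Finset.Icc 1 m,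
    ∫ S : Fin (k - 1) → Z, margContrib U z S ∂(Measure.pi fun _ => D)

/-- If the potential `U : Z* → [0,1]` is `β(k)`-Lipschitz stable with respect to the
metric `d` (i.e. `|U(S ∪ {z}) − U(S ∪ {z'})| ≤ β(|S|+1)·d(z,z')` for all finite
multisets `S` and points `z, z'`), with `β : ℕ → [0,1]` non-increasing, then
`|ν(z;U,D,m) − ν(z';U,D,m)| ≤ E_{k ~ Uniform[m]}[β(k)] · d(z,z')`. -/
theorem distShapley_lipschitz {Z : Type*} [MeasurableSpace Z] [MetricSpace Z]
    (U : Multiset Z → ℝ) (hU01 : ∀ S, U S ∈ Set.Icc (0 : ℝ) 1)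
    (hUmeas : ∀ n : ℕ, Measurable fun S : Fin n → Z => U ↑(List.ofFn S))
    (β : ℕ → ℝ) (hβ01 : ∀ k, β k ∈ Set.Icc (0 : ℝ) 1) (hβmono : Antitone β)
    (hLip : ∀ (S : Multiset Z) (z z' : Z),
      |U (z ::ₘ S) - U (z' ::ₘ S)| ≤ β (Multiset.card S + 1) * dist z z')
    (D : Measure Z) [IsProbabilityMeasure D] (m : ℕ) (hm : 1 ≤ m) (z z' : Z) :
    |distShapley U D m z - distShapley U D m z'|
      ≤ ((1 / m : ℝ) * ∑ k ∈ Finset.Icc 1 m, β k) * dist z z' := by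
  classical
  have hd : 0 ≤ dist z z' := dist_nonneg
  -- measurability of S ↦ U (w ::ₘ ofFn S)
  have heqcons : ∀ (n : ℕ) (w : Z) (S : Fin n → Z),
      (w ::ₘ ↑(List.ofFn S) : Multiset Z) = ↑(List.ofFn (Fin.cons w S)) := by
    intro n w S
    simp [List.ofFn_succ]
  have meascons : ∀ (n : ℕ) (w : Z),
      Measurable fun S : Fin n → Z => U (w ::ₘ ↑(List.ofFn S)) := by
    intro n w
    have h1 : Measurable fun S : Fin n → Z => (Fin.cons w S : Fin (n + 1) → Z) :=
      measurable_pi_lambda _ (fun i => by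
        refine Fin.cases ?_ ?_ i
        · simpa using (measurable_const : Measurable fun _ : Fin n → Z => w)
        · intro j; simpa using measurable_pi_apply j)
    have h2 := (hUmeas (n + 1)).comp h1
    simpa [Function.comp_def, heqcons] using h2
  have hIntCons : ∀ (n : ℕ) (w : Z),
      Integrable (fun S : Fin n → Z => U (w ::ₘ ↑(List.ofFn S)))
        (Measure.pi fun _ : Fin n => D) := by
    intro n w
    refine ⟨(meascons n w).aestronglyMeasurable, ?_⟩
    refine HasFiniteIntegral.of_bounded (C := 1) ?_
    filter_upwards with S
    have h := hU01 (w ::ₘ ↑(List.ofFn S))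
    rw [Real.norm_eq_abs, abs_le]
    exact ⟨le_trans (by norm_num) h.1, h.2⟩
  have hIntBase : ∀ n : ℕ,
      Integrable (fun S : Fin n → Z => U ↑(List.ofFn S))
        (Measure.pi fun _ : Fin n => D) := by
    intro n
    refine ⟨(hUmeas n).aestronglyMeasurable, ?_⟩
    refine HasFiniteIntegral.of_bounded (C := 1) ?_
    filter_upwards with S
    have h := hU01 ↑(List.ofFn S)
    rw [Real.norm_eq_abs, abs_le]
    exact ⟨le_trans (by norm_num) h.1, h.2⟩
  have hIntMarg : ∀ (n : ℕ) (w : Z),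
      Integrable (fun S : Fin n → Z => margContrib U w S)
        (Measure.pi fun _ : Fin n => D) := fun n w => (hIntCons n w).sub (hIntBase n)
  -- key per-k bound
  have key : ∀ k ∈ Finset.Icc 1 m,
      |(∫ S : Fin (k - 1) → Z, margContrib U z S ∂(Measure.pi fun _ => D)) -
        ∫ S : Fin (k - 1) → Z, margContrib U z' S ∂(Measure.pi fun _ => D)|
        ≤ β k * dist z z' := by
    intro k hk
    have hk1 : 1 ≤ k := (Finset.mem_Icc.mp hk).1
    set n := k - 1 with hn
    have hsub : (∫ S : Fin n → Z, margContrib U z S ∂(Measure.pi fun _ => D)) -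
        ∫ S : Fin n → Z, margContrib U z' S ∂(Measure.pi fun _ => D)
        = ∫ S : Fin n → Z, (U (z ::ₘ ↑(List.ofFn S)) - U (z' ::ₘ ↑(List.ofFn S)))
            ∂(Measure.pi fun _ => D) := by
      rw [← integral_sub (hIntMarg n z) (hIntMarg n z')]
      congr 1
      funext S
      simp [margContrib]
    rw [hsub]
    have hbnd : ∀ S : Fin n → Z,
        ‖U (z ::ₘ ↑(List.ofFn S)) - U (z' ::ₘ ↑(List.ofFn S))‖ ≤ β k * dist z z' := by
      intro S
      have h := hLip ↑(List.ofFn S) z z'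
      have hcard : Multiset.card (↑(List.ofFn S) : Multiset Z) + 1 = k := by
        simp [Multiset.coe_card, List.length_ofFn, hn, Nat.sub_add_cancel hk1]
      rw [hcard] at h
      simpa [Real.norm_eq_abs] using h
    calc ‖∫ S : Fin n → Z, (U (z ::ₘ ↑(List.ofFn S)) - U (z' ::ₘ ↑(List.ofFn S)))
            ∂(Measure.pi fun _ => D)‖
        ≤ (β k * dist z z') * ((Measure.pi fun _ : Fin n => D) Set.univ).toReal :=
          norm_integral_le_of_norm_le_const (Filter.Eventually.of_forall hbnd)
      _ = β k * dist z z' := by simp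
  -- assemble
  have hdiff : distShapley U D m z - distShapley U D m z'
      = (1 / m : ℝ) * ∑ k ∈ Finset.Icc 1 m,
          ((∫ S : Fin (k - 1) → Z, margContrib U z S ∂(Measure.pi fun _ => D)) -
            ∫ S : Fin (k - 1) → Z, margContrib U z' S ∂(Measure.pi fun _ => D)) := by
    rw [distShapley, distShapley, Finset.sum_sub_distrib]
    ring
  rw [hdiff]
  have hm0 : (0 : ℝ) ≤ 1 / m := by positivity
  rw [abs_mul, abs_of_nonneg hm0]
  calc (1 / m : ℝ) * |∑ k ∈ Finset.Icc 1 m,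
          ((∫ S : Fin (k - 1) → Z, margContrib U z S ∂(Measure.pi fun _ => D)) -
            ∫ S : Fin (k - 1) → Z, margContrib U z' S ∂(Measure.pi fun _ => D))|
      ≤ (1 / m : ℝ) * ∑ k ∈ Finset.Icc 1 m, (β k * dist z z') := by
        refine mul_le_mul_of_nonneg_left ?_ hm0
        exact (Finset.abs_sum_le_sum_abs _ _).trans (Finset.sum_le_sum key)
    _ = ((1 / m : ℝ) * ∑ k ∈ Finset.Icc 1 m, β k) * dist z z' := by
        rw [← Finset.sum_mul]; ring
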